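/- Let G be a finite simple graph on n vertices that contains a perfect matching M such that each edge uv ∈ M is a pair of adjacent twins, i.e., N[u] = N[v]. Then r₂(G) = n and b₂(G) ≤ n/2 + 1. -/

import Mathlib

open scoped Classical

/-- A list of bicliques `B 0, …, B (k-1)` (each given by a pair of disjoint
vertex subsets) is an *odd cover* of `G` if two distinct vertices are adjacent
in `G` exactly when they lie in opposite parts of an odd number of the bicliques. -/
def IsOddCover {V : Type*} [Fintype V] (G : SimpleGraph V) {k : ℕ}
    (B : Fin k → Finset V × Finset V) : Prop :=
  (∀ i, Disjoint (B i).1 (B i).2) ∧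
  ∀ u v : V, u ≠ v →
    (G.Adj u v ↔ Odd (Finset.univ.filter (fun i : Fin k =>
      (u ∈ (B i).1 ∧ v ∈ (B i).2) ∨ (u ∈ (B i).2 ∧ v ∈ (B i).1))).card)

/-- `b2 G` is the minimum cardinality of an odd cover of `G`. -/
noncomputable def b2 {V : Type*} [Fintype V] (G : SimpleGraph V) : ℕ :=
  sInf {k : ℕ | ∃ B : Fin k → Finset V × Finset V, IsOddCover G B}

/-- `r2 G` is the rank of the adjacency matrix of `G` over `𝔽₂`. -/
noncomputable def r2 {V : Type*} [Fintype V] (G : SimpleGraph V) : ℕ :=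
  (Matrix.of fun u v : V => if G.Adj u v then (1 : ZMod 2) else 0).rank

set_option linter.unusedSectionVars false
namespace OddCoverAux
variable {V : Type*} [Fintype V] (G : SimpleGraph V) (σ : V → V)

theorem rank_aux (σ : V → V)
    (hadj : ∀ v, G.Adj v (σ v))
    (hinv : ∀ v, σ (σ v) = v)
    (htw : ∀ v z, z ≠ v → z ≠ σ v → (G.Adj v z ↔ G.Adj (σ v) z)) :
    (Matrix.of fun u v : V => if G.Adj u v then (1 : ZMod 2) else 0).rank
      = Fintype.card V := by
  classical
  set A : Matrix V V (ZMod 2) := Matrix.of fun u v : V => if G.Adj u v then (1 : ZMod 2) else 0 with hA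
  have hσne : ∀ v, σ v ≠ v := fun v => fun h => G.irrefl (h ▸ hadj v)
  set N : Matrix V V (ZMod 2) := fun u v => A u v + if v = u then 1 else 0 with hN
  have hAsymm : ∀ u v, A u v = A v u := by
    intro u v; simp only [hA, Matrix.of_apply]
    by_cases h : G.Adj u v
    · simp [h, h.symm]
    · have h' : ¬ G.Adj v u := fun hh => h hh.symm
      simp [h, h']
  have hNsymm : ∀ u v, N u v = N v u := by
    intro u v; simp only [hN, hAsymm u v]
    by_cases h : v = u
    · simp [h]
    · have h' : ¬ (u = v) := fun hh => h hh.symm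
      simp [h, h']
  have hrow : ∀ v z, N v z = N (σ v) z := by
    intro v z
    by_cases h1 : z = v
    · subst h1
      simp only [hN, hA, Matrix.of_apply]
      have hzz : ¬ G.Adj z z := G.irrefl
      have h2 : G.Adj (σ z) z := (hadj z).symm
      have h3 : ¬ (z = σ z) := fun h => (hσne z) h.symm
      simp [hzz, h2, h3]
    · by_cases h2 : z = σ v
      · subst h2
        simp only [hN, hA, Matrix.of_apply]
        have h3 : G.Adj v (σ v) := hadj v
        have h4 : ¬ G.Adj (σ v) (σ v) := G.irrefl
        have h5 : ¬ (σ v = v) := hσne v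
        simp [h3, h4, h5]
      · simp only [hN, hA, Matrix.of_apply]
        have hiff := htw v z h1 h2
        by_cases h : G.Adj v z
        · simp [h, hiff.mp h, h1, h2]
        · have h' : ¬ G.Adj (σ v) z := fun hh => h (hiff.mpr hh)
          simp [h, h', h1, h2]
  have hker : ∀ x : V → ZMod 2, A.mulVec x = 0 → x = 0 := by
    intro x hx
    have hxv : ∀ v, ∑ z, N v z * x z = x v := by
      intro v
      have h0 : ∑ z, A v z * x z = 0 := by
        have := congrFun hx v
        simpa [Matrix.mulVec, dotProduct] using this
      calc ∑ z, N v z * x z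
          = ∑ z, (A v z * x z + (if z = v then 1 else 0) * x z) := by
            apply Finset.sum_congr rfl; intro z _; simp only [hN]; ring
        _ = (∑ z, A v z * x z) + ∑ z, (if z = v then 1 else 0) * x z := by
            rw [Finset.sum_add_distrib]
        _ = x v := by
            rw [h0, zero_add]
            simp [Finset.sum_ite_eq']
    have hxσ : ∀ v, x (σ v) = x v := by
      intro v
      rw [← hxv v, ← hxv (σ v)]
      apply Finset.sum_congr rfl
      intro z _
      rw [hrow v z]
    funext v
    simp only [Pi.zero_apply]
    rw [← hxv v]
    apply Finset.sum_involution (fun z _ => σ z)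
    · intro z _
      have h1 : N v (σ z) = N v z := by
        rw [hNsymm v (σ z), ← hrow z v, hNsymm z v]
      rw [h1, hxσ z]
      exact CharTwo.add_self_eq_zero _
    · intro z _ _; exact fun h => hσne z h
    · intro z _; exact Finset.mem_univ _
    · intro z _; exact hinv z
  -- conclude rank
  have hkerbot : LinearMap.ker A.mulVecLin = ⊥ := by
    rw [LinearMap.ker_eq_bot']
    intro m hm
    exact hker m hm
  have := LinearMap.finrank_range_add_finrank_ker A.mulVecLin
  rw [hkerbot] at this
  simp only [finrank_bot, add_zero] at this
  rw [Matrix.rank, this, Module.finrank_pi]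



noncomputable def vord : V → ℕ := fun v => (Fintype.equivFin V v : ℕ)

noncomputable def rp : V → V := fun v => if vord v ≤ vord (σ v) then v else σ v

noncomputable def RR : Finset V := Finset.univ.filter (fun v => rp σ v = v)

noncomputable def sg : V → ZMod 2 := fun v => if rp σ v = v then 0 else 1

noncomputable def A1 : V → V → ZMod 2 := fun i j => if G.Adj i j then 1 else 0

noncomputable def eta1 : ZMod 2 :=
  ∑ i ∈ RR σ, ∑ j ∈ RR σ, if vord i < vord j then A1 G i j else 0

def tact : Prop := ¬ Odd (RR σ).card ∧ eta1 G σ = 1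

noncomputable def E1 : Finset (V × V) :=
  ((RR σ) ×ˢ (RR σ)).filter (fun p => vord p.1 < vord p.2 ∧ A1 G p.1 p.2 = 1)

noncomputable def tg : V → V → ZMod 2 := fun i j =>
  if h : (E1 G σ).Nonempty then
    (if tact G σ ∧ ((i, j) = h.choose ∨ (j, i) = h.choose) then 1 else 0)
  else 0

noncomputable def A2 : V → V → ZMod 2 := fun i j => A1 G i j + tg G σ i j

noncomputable def f2 : V → ZMod 2 := fun i =>
  ∑ j ∈ RR σ, if vord i < vord j then A2 G σ i j else 0

noncomputable def gam : V → V → ZMod 2 := fun i r =>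
  (if vord i < vord r then A2 G σ i r else 0) +
  (if ¬ Odd (RR σ).card ∧ r ≠ i ∧ f2 G σ i = 1 ∧ f2 G σ r = 1 then 1 else 0)

noncomputable def gam0 : V → ZMod 2 := fun i => if Odd (RR σ).card then f2 G σ i else 0

noncomputable def sd : V → V → ZMod 2 := fun v r => sg σ v + gam G σ (rp σ v) r

noncomputable def sd0 : V → ZMod 2 := fun v => sg σ v + gam0 G σ (rp σ v)

noncomputable def Bo : Option {x // x ∈ RR σ} → Finset V × Finset V := fun o =>
  match o with
  | some r => (Finset.univ.filter (fun v => rp σ v ≠ r.1 ∧ sd G σ v r.1 = 0),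
               Finset.univ.filter (fun v => rp σ v ≠ r.1 ∧ sd G σ v r.1 = 1))
  | none =>
    if Odd (RR σ).card then
      (Finset.univ.filter (fun v => sd0 G σ v = 0),
       Finset.univ.filter (fun v => sd0 G σ v = 1))
    else if h : (E1 G σ).Nonempty then
      (if tact G σ then (Finset.univ.filter (fun v => rp σ v = h.choose.1),
                         Finset.univ.filter (fun v => rp σ v = h.choose.2))
       else (∅, ∅))
    else (∅, ∅)

section Basic
variable {σ}
variable (hσne : ∀ v, σ v ≠ v) (hinv : ∀ v, σ (σ v) = v)

theorem vord_inj : ∀ {a b : V}, vord a = vord b → a = b := by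
  intro a b h
  have := (Fintype.equivFin V).injective (Fin.val_injective h)
  exact this

include hinv hσne in
theorem rp_sigma : ∀ v, rp σ (σ v) = rp σ v := by
  intro v
  have hne : vord (σ v) ≠ vord v := fun h => hσne v (vord_inj h)
  simp only [rp, hinv v]
  rcases lt_or_gt_of_ne hne with h | h
  · rw [if_pos (le_of_lt h), if_neg (not_le.2 h)]
  · rw [if_neg (not_le.2 h), if_pos (le_of_lt h)]

theorem rp_cases : ∀ v, rp σ v = v ∨ rp σ v = σ v := by
  intro v; simp only [rp]; by_cases h : vord v ≤ vord (σ v) <;> simp [h]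

include hinv hσne in
theorem rp_mem : ∀ v, rp σ v ∈ RR σ := by
  intro v
  simp only [RR, Finset.mem_filter, Finset.mem_univ, true_and]
  rcases rp_cases (σ := σ) v with h | h
  · rw [h, h]
  · rw [h, rp_sigma hσne hinv, h]

theorem rp_eq_of_mem {x : V} (hx : x ∈ RR σ) : rp σ x = x := by
  simpa [RR] using hx

include hinv in
theorem self_cases : ∀ v, v = rp σ v ∨ v = σ (rp σ v) := by
  intro v
  rcases rp_cases (σ := σ) v with h | h
  · exact Or.inl h.symm
  · right; rw [h, hinv]

omit hσne in
include hinv in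
theorem same_pair {u v : V} (h : rp σ u = rp σ v) (hne : u ≠ v) : v = σ u := by
  rcases self_cases hinv u with hu | hu <;> rcases self_cases hinv v with hv | hv
  · exact absurd (hu.trans (h.trans hv.symm)) hne
  · rw [hv, ← h, ← hu]
  · rw [hu, hinv, h, ← hv]
  · rw [hu, hv, h] at hne ⊢
    exact absurd rfl hne

include hinv hσne in
theorem sg_same_pair {u v : V} (h : rp σ u = rp σ v) (hne : u ≠ v) :
    sg σ u + sg σ v = 1 := by
  have hv := same_pair hinv h hne
  subst hv
  rcases rp_cases (σ := σ) u with h1 | h1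
  · have h2 : rp σ (σ u) ≠ σ u := by
      rw [← h, h1]
      exact fun hh => hσne u hh.symm
    simp [sg, h1, h2]
  · have h2 : rp σ u ≠ u := by
      rw [h1]; exact hσne u
    have h3 : rp σ (σ u) = σ u := by rw [← h, h1]
    simp [sg, h2, h3]

include hinv hσne in
theorem card_eq : Fintype.card V = 2 * (RR σ).card := by
  classical
  have hfib : ∀ i ∈ RR σ, (Finset.univ.filter (fun v => rp σ v = i)).card = 2 := by
    intro i hi
    have hii : rp σ i = i := rp_eq_of_mem hi
    have : Finset.univ.filter (fun v => rp σ v = i) = {i, σ i} := by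
      ext v
      simp only [Finset.mem_filter, Finset.mem_univ, true_and, Finset.mem_insert,
        Finset.mem_singleton]
      constructor
      · intro hv
        rcases self_cases hinv v with h | h
        · left; rw [h, hv]
        · right; rw [h, hv]
      · rintro (rfl | rfl)
        · exact hii
        · rw [rp_sigma hσne hinv, hii]
    rw [this]
    rw [Finset.card_insert_of_notMem (by
      simp only [Finset.mem_singleton]
      exact fun hh => hσne i hh.symm)]
    simp
  have := Finset.card_eq_sum_card_fiberwise
    (f := rp σ) (s := (Finset.univ : Finset V)) (t := RR σ)
    (fun v _ => rp_mem hσne hinv v)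
  rw [Finset.card_univ] at this
  rw [this, Finset.sum_congr rfl hfib, Finset.sum_const, smul_eq_mul, mul_comm]

end Basic

section Transfer
variable {G} {σ}
variable (hσne : ∀ v, σ v ≠ v) (hinv : ∀ v, σ (σ v) = v)
  (htw : ∀ v z, z ≠ v → z ≠ σ v → (G.Adj v z ↔ G.Adj (σ v) z))

include hσne hinv htw in
theorem adj_transfer {u v : V} (h : rp σ u ≠ rp σ v) :
    (G.Adj u v ↔ G.Adj (rp σ u) (rp σ v)) := by
  have key : ∀ a z : V, rp σ z ≠ rp σ a → (G.Adj a z ↔ G.Adj (rp σ a) z) := by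
    intro a z hz
    rcases self_cases hinv a with ha | ha
    · rw [← ha]
    · have h1 : z ≠ rp σ a := by
        intro hh
        exact hz (by rw [hh, rp_eq_of_mem (rp_mem hσne hinv a)])
      have h2 : z ≠ σ (rp σ a) := by
        intro hh
        apply hz
        rw [hh, rp_sigma hσne hinv, rp_eq_of_mem (rp_mem hσne hinv a)]
      have := htw (rp σ a) z h1 h2
      rw [← ha] at this
      exact this.symm
  have step1 := key u v h.symm
  have step2 : G.Adj (rp σ u) v ↔ G.Adj (rp σ u) (rp σ v) := by
    rw [G.adj_comm (rp σ u) v, G.adj_comm (rp σ u) (rp σ v)]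
    apply key
    rw [rp_eq_of_mem (rp_mem hσne hinv u)]
    exact h
  exact step1.trans step2

end Transfer

section Core
variable {V' : Type*}

theorem zmod2_ite_eq_one (x : ZMod 2) : (if x = 1 then (1 : ZMod 2) else 0) = x := by
  revert x; decide

theorem zmod2_eq_zero {x : ZMod 2} (h : x ≠ 1) : x = 0 := by
  revert x; decide

theorem zmod2_self_add (x : ZMod 2) : x + x = 0 := by
  revert x; decide

theorem zmod2_add_one {a : ZMod 2} (h : a + 1 = 0) : a = 1 := by
  revert h; revert a; decide

end Core

section Core2
variable {G} {σ}

theorem A1_symm (i j : V) : A1 G i j = A1 G j i := by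
  simp only [A1, G.adj_comm]

theorem tg_symm (i j : V) : tg G σ i j = tg G σ j i := by
  simp only [tg]
  by_cases h : (E1 G σ).Nonempty
  · rw [dif_pos h, dif_pos h]
    exact if_congr (and_congr_right' or_comm) rfl rfl
  · rw [dif_neg h, dif_neg h]

theorem A2_symm (i j : V) : A2 G σ i j = A2 G σ j i := by
  simp only [A2, A1_symm, tg_symm]

theorem gam_self (i : V) : gam G σ i i = 0 := by
  simp [gam]

theorem gam_add {i j : V} (hij : i ≠ j) :
    gam G σ i j + gam G σ j i = A2 G σ i j := by
  have hord : vord i ≠ vord j := fun h => hij (vord_inj h)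
  simp only [gam]
  have hT : (if ¬ Odd (RR σ).card ∧ j ≠ i ∧ f2 G σ i = 1 ∧ f2 G σ j = 1 then (1:ZMod 2) else 0)
      = (if ¬ Odd (RR σ).card ∧ i ≠ j ∧ f2 G σ j = 1 ∧ f2 G σ i = 1 then (1:ZMod 2) else 0) := by
    congr 1
    simp only [eq_iff_iff]
    constructor
    · rintro ⟨h1, h2, h3, h4⟩; exact ⟨h1, h2.symm, h4, h3⟩
    · rintro ⟨h1, h2, h3, h4⟩; exact ⟨h1, h2.symm, h4, h3⟩
  rcases lt_or_gt_of_ne hord with h | h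
  · rw [if_pos h, if_neg (by omega : ¬ vord j < vord i)]
    rw [hT]
    ring_nf
    rw [mul_two, zmod2_self_add, add_zero]
  · rw [if_neg (by omega : ¬ vord i < vord j), if_pos h]
    rw [hT, A2_symm]
    ring_nf
    rw [mul_two, zmod2_self_add, zero_add]

theorem E1_nonempty_of_tact (ht : tact G σ) : (E1 G σ).Nonempty := by
  have h1 : eta1 G σ ≠ 0 := by rw [ht.2]; decide
  obtain ⟨i, hi, hi2⟩ := Finset.exists_ne_zero_of_sum_ne_zero h1
  obtain ⟨j, hj, hj2⟩ := Finset.exists_ne_zero_of_sum_ne_zero hi2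
  by_cases hord : vord i < vord j
  · rw [if_pos hord] at hj2
    refine ⟨(i, j), ?_⟩
    simp only [E1, Finset.mem_filter, Finset.mem_product]
    refine ⟨⟨hi, hj⟩, hord, ?_⟩
    by_contra hcon
    exact hj2 (zmod2_eq_zero hcon)
  · rw [if_neg hord] at hj2; exact absurd rfl hj2

theorem tg_sum :
    (∑ i ∈ RR σ, ∑ j ∈ RR σ, if vord i < vord j then tg G σ i j else 0)
      = if tact G σ then 1 else 0 := by
  by_cases ht : tact G σ
  · have hne := E1_nonempty_of_tact (G := G) (σ := σ) ht
    have hp := hne.choose_spec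
    simp only [E1, Finset.mem_filter, Finset.mem_product] at hp
    obtain ⟨⟨hp1, hp2⟩, hp3, hp4⟩ := hp
    replace hp3 : vord hne.choose.1 < vord hne.choose.2 := hp3
    rw [if_pos ht]
    have htg : ∀ i j : V, tg G σ i j =
        if (i, j) = hne.choose ∨ (j, i) = hne.choose then 1 else 0 := by
      intro i j
      simp only [tg, dif_pos hne, ht, true_and]
    calc (∑ i ∈ RR σ, ∑ j ∈ RR σ, if vord i < vord j then tg G σ i j else 0)
        = ∑ x ∈ (RR σ) ×ˢ (RR σ),
            (if vord x.1 < vord x.2 then tg G σ x.1 x.2 else 0) := by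
          rw [Finset.sum_product]
      _ = 1 := by
          rw [Finset.sum_eq_single hne.choose]
          · rw [if_pos hp3, htg]
            simp
          · intro b hb hbne
            by_cases hbo : vord b.1 < vord b.2
            · rw [if_pos hbo, htg]
              rw [if_neg]
              rintro (h | h)
              · exact hbne (by rw [← h])
              · rw [← h] at hp3
                have hp3' : vord b.2 < vord b.1 := hp3
                omega
            · rw [if_neg hbo]
          · intro hh
            exact absurd (Finset.mem_product.2 ⟨hp1, hp2⟩) hh
  · rw [if_neg ht]
    apply Finset.sum_eq_zero
    intro i _
    apply Finset.sum_eq_zero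
    intro j _
    have : tg G σ i j = 0 := by
      simp only [tg]
      by_cases h : (E1 G σ).Nonempty
      · rw [dif_pos h, if_neg (fun hh => ht hh.1)]
      · rw [dif_neg h]
    rw [this, ite_self]

noncomputable def eta2 : ZMod 2 := ∑ r ∈ RR σ, f2 G σ r

theorem eta2_eq (hk : ¬ Odd (RR σ).card) : eta2 (G := G) (σ := σ) = 0 := by
  have hsplit : eta2 (G := G) (σ := σ) = eta1 G σ +
      (∑ i ∈ RR σ, ∑ j ∈ RR σ, if vord i < vord j then tg G σ i j else 0) := by
    rw [eta2, eta1, ← Finset.sum_add_distrib]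
    apply Finset.sum_congr rfl
    intro i _
    rw [f2, ← Finset.sum_add_distrib]
    apply Finset.sum_congr rfl
    intro j _
    by_cases h : vord i < vord j
    · rw [if_pos h, if_pos h, if_pos h]; rfl
    · rw [if_neg h, if_neg h, if_neg h, add_zero]
  rw [hsplit, tg_sum]
  by_cases h1 : eta1 G σ = 1
  · rw [h1, if_pos ⟨hk, h1⟩]; decide
  · rw [zmod2_eq_zero h1, if_neg (fun hh : tact G σ => h1 hh.2), add_zero]

theorem W_lemma {x : V} (hx : x ∈ RR σ) :
    (∑ r ∈ RR σ, gam G σ x r) = if Odd (RR σ).card then f2 G σ x else 0 := by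
  have hsplit : (∑ r ∈ RR σ, gam G σ x r) = f2 G σ x +
      ∑ r ∈ RR σ, (if ¬ Odd (RR σ).card ∧ r ≠ x ∧ f2 G σ x = 1 ∧ f2 G σ r = 1
        then (1 : ZMod 2) else 0) := by
    rw [f2, ← Finset.sum_add_distrib]
    apply Finset.sum_congr rfl
    intro r _; rfl
  rw [hsplit]
  by_cases hk : Odd (RR σ).card
  · rw [if_pos hk]
    have : ∀ r ∈ RR σ, (if ¬ Odd (RR σ).card ∧ r ≠ x ∧ f2 G σ x = 1 ∧ f2 G σ r = 1
        then (1 : ZMod 2) else 0) = 0 := by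
      intro r _; rw [if_neg (fun hh => hh.1 hk)]
    rw [Finset.sum_congr rfl this, Finset.sum_const, smul_zero, add_zero]
  · rw [if_neg hk]
    by_cases hfx : f2 G σ x = 1
    · have hTT : (∑ r ∈ RR σ, (if ¬ Odd (RR σ).card ∧ r ≠ x ∧ f2 G σ x = 1 ∧ f2 G σ r = 1
          then (1 : ZMod 2) else 0)) = 1 := by
        have hpt : ∀ r ∈ RR σ,
            (if f2 G σ r = 1 then (1:ZMod 2) else 0) =
            (if ¬ Odd (RR σ).card ∧ r ≠ x ∧ f2 G σ x = 1 ∧ f2 G σ r = 1 then (1:ZMod 2) else 0)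
              + (if r = x then (if f2 G σ r = 1 then (1:ZMod 2) else 0) else 0) := by
          intro r _
          by_cases hrx : r = x
          · rw [if_pos hrx, if_neg (show ¬(¬ Odd (RR σ).card ∧ r ≠ x ∧ f2 G σ x = 1 ∧
                f2 G σ r = 1) from fun hh => hh.2.1 hrx), zero_add, hrx]
          · rw [if_neg hrx, add_zero]
            by_cases hfr : f2 G σ r = 1
            · rw [if_pos hfr, if_pos ⟨hk, hrx, hfx, hfr⟩]
            · rw [if_neg hfr, if_neg (fun hh => hfr hh.2.2.2)]
        have h2 : (∑ r ∈ RR σ, if f2 G σ r = 1 then (1:ZMod 2) else 0) = 0 := by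
          have : ∀ r ∈ RR σ, (if f2 G σ r = 1 then (1:ZMod 2) else 0) = f2 G σ r :=
            fun r _ => zmod2_ite_eq_one _
          rw [Finset.sum_congr rfl this]
          exact eta2_eq hk
        rw [Finset.sum_congr rfl hpt, Finset.sum_add_distrib] at h2
        rw [Finset.sum_ite_eq' (RR σ) x, if_pos hx, if_pos hfx] at h2
        exact zmod2_add_one h2
      rw [hTT, hfx]; decide
    · have hz : f2 G σ x = 0 := zmod2_eq_zero hfx
      rw [hz, zero_add]
      apply Finset.sum_eq_zero
      intro r _
      rw [if_neg]
      rintro ⟨-, -, h01, -⟩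
      exact absurd h01 (by decide)

end Core2

def OppP (u v : V) (B : Finset V × Finset V) : Prop :=
  (u ∈ B.1 ∧ v ∈ B.2) ∨ (u ∈ B.2 ∧ v ∈ B.1)

section KeyHelpers
variable {G} {σ}

theorem zmod2_opp_iff (a b : ZMod 2) : ((a = 0 ∧ b = 1) ∨ (a = 1 ∧ b = 0)) ↔ a + b = 1 := by
  revert a b; decide

theorem zmod2_natCast_odd {n : ℕ} (h : Odd n) : ((n : ZMod 2) = 1) := by
  rw [← ZMod.natCast_mod n 2, Nat.odd_iff.1 h]; rfl

theorem zmod2_natCast_even {n : ℕ} (h : ¬ Odd n) : ((n : ZMod 2) = 0) := by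
  rw [← ZMod.natCast_mod n 2]
  rcases Nat.mod_two_eq_zero_or_one n with h2 | h2
  · rw [h2]; rfl
  · exact absurd (Nat.odd_iff.2 h2) h

theorem some_val (u v : V) (r : {x // x ∈ RR σ}) :
    (if OppP u v (Bo G σ (some r)) then (1 : ZMod 2) else 0)
      = if rp σ u ≠ r.1 ∧ rp σ v ≠ r.1 then (sd G σ u r.1 + sd G σ v r.1) else 0 := by
  have hiff : OppP u v (Bo G σ (some r)) ↔
      ((rp σ u ≠ r.1 ∧ rp σ v ≠ r.1) ∧ (sd G σ u r.1 + sd G σ v r.1 = 1)) := by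
    simp only [OppP, Bo, Finset.mem_filter, Finset.mem_univ, true_and]
    rw [← zmod2_opp_iff (sd G σ u r.1) (sd G σ v r.1)]
    tauto
  rw [if_congr hiff rfl rfl]
  by_cases hm : rp σ u ≠ r.1 ∧ rp σ v ≠ r.1
  · rw [if_pos hm]
    by_cases hs : sd G σ u r.1 + sd G σ v r.1 = 1
    · rw [if_pos ⟨hm, hs⟩, hs]
    · rw [if_neg (fun hh => hs hh.2), zmod2_eq_zero hs]
  · rw [if_neg hm, if_neg (fun hh => hm hh.1)]

theorem none_val_odd (hodd : Odd (RR σ).card) (u v : V) :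
    (if OppP u v (Bo G σ none) then (1:ZMod 2) else 0) = sd0 G σ u + sd0 G σ v := by
  have hiff : OppP u v (Bo G σ none) ↔ sd0 G σ u + sd0 G σ v = 1 := by
    simp only [OppP, Bo, if_pos hodd, Finset.mem_filter, Finset.mem_univ, true_and]
    rw [← zmod2_opp_iff (sd0 G σ u) (sd0 G σ v)]
  rw [if_congr hiff rfl rfl, zmod2_ite_eq_one]

theorem none_val_even (hodd : ¬ Odd (RR σ).card) (u v : V) :
    (if OppP u v (Bo G σ none) then (1:ZMod 2) else 0) = tg G σ (rp σ u) (rp σ v) := by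
  simp only [Bo, if_neg hodd, tg]
  by_cases h : (E1 G σ).Nonempty
  · rw [dif_pos h, dif_pos h]
    by_cases ht : tact G σ
    · rw [if_pos ht]
      have hiff : OppP u v
          (Finset.univ.filter (fun v => rp σ v = h.choose.1),
           Finset.univ.filter (fun v => rp σ v = h.choose.2)) ↔
          ((rp σ u, rp σ v) = h.choose ∨ (rp σ v, rp σ u) = h.choose) := by
        simp only [OppP, Finset.mem_filter, Finset.mem_univ, true_and, Prod.ext_iff]
        tauto
      rw [if_congr hiff rfl rfl,
        if_congr (show (tact G σ ∧ ((rp σ u, rp σ v) = Exists.choose h ∨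
          (rp σ v, rp σ u) = Exists.choose h)) ↔ ((rp σ u, rp σ v) = Exists.choose h ∨
          (rp σ v, rp σ u) = Exists.choose h) from and_iff_right ht) rfl rfl]
    · rw [if_neg ht]
      have : ¬ OppP u v ((∅ : Finset V), (∅ : Finset V)) := by
        simp [OppP]
      rw [if_neg this, if_neg (fun hh => ht hh.1)]
  · rw [dif_neg h, dif_neg h]
    have : ¬ OppP u v ((∅ : Finset V), (∅ : Finset V)) := by
      simp [OppP]
    rw [if_neg this]

variable (hσne : ∀ v, σ v ≠ v) (hinv : ∀ v, σ (σ v) = v)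
  (hadj : ∀ v, G.Adj v (σ v))
  (htw : ∀ v z, z ≠ v → z ≠ σ v → (G.Adj v z ↔ G.Adj (σ v) z))

include hσne hinv hadj htw in
theorem key_sum (u v : V) (huv : u ≠ v) :
    ((if OppP u v (Bo G σ none) then (1:ZMod 2) else 0)
      + ∑ r : {x // x ∈ RR σ}, (if OppP u v (Bo G σ (some r)) then (1:ZMod 2) else 0))
      = if G.Adj u v then 1 else 0 := by
  classical
  have hsum1 : (∑ r : {x // x ∈ RR σ}, (if OppP u v (Bo G σ (some r)) then (1:ZMod 2) else 0))
      = ∑ x ∈ RR σ, (if rp σ u ≠ x ∧ rp σ v ≠ x then (sd G σ u x + sd G σ v x) else 0) := by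
    rw [Finset.sum_congr rfl (fun r _ => some_val u v r)]
    exact Finset.sum_coe_sort (RR σ)
      (fun x => if rp σ u ≠ x ∧ rp σ v ≠ x then (sd G σ u x + sd G σ v x) else 0)
  rw [hsum1]
  have hiR : rp σ u ∈ RR σ := rp_mem hσne hinv u
  have hjR : rp σ v ∈ RR σ := rp_mem hσne hinv v
  by_cases hij : rp σ u = rp σ v
  -- same pair
  · have hv : v = σ u := same_pair hinv hij huv
    have hGadj : G.Adj u v := by rw [hv]; exact hadj u
    have ht1 : sg σ u + sg σ v = 1 := sg_same_pair hσne hinv hij huv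
    have hpt : ∀ x ∈ RR σ,
        (if rp σ u ≠ x ∧ rp σ v ≠ x then (sd G σ u x + sd G σ v x) else 0)
          = 1 + (if x = rp σ u then (1 : ZMod 2) else 0) := by
      intro x _
      by_cases hx : x = rp σ u
      · rw [if_neg (fun hh => hh.1 hx.symm), if_pos hx, zmod2_self_add]
      · have hcond : rp σ u ≠ x ∧ rp σ v ≠ x := ⟨fun hh => hx hh.symm, fun hh => hx (hij ▸ hh.symm)⟩
        rw [if_pos hcond, if_neg hx, add_zero]
        have : sd G σ u x + sd G σ v x = (sg σ u + sg σ v) + (gam G σ (rp σ u) x + gam G σ (rp σ v) x) := by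
          simp only [sd]; ring
        rw [this, ← hij, zmod2_self_add, add_zero, ht1]
    rw [Finset.sum_congr rfl hpt, Finset.sum_add_distrib, Finset.sum_const,
      Finset.sum_ite_eq' (RR σ) (rp σ u), if_pos hiR]
    rw [if_pos hGadj]
    by_cases hodd : Odd (RR σ).card
    · rw [none_val_odd hodd]
      have : sd0 G σ u + sd0 G σ v = 1 := by
        simp only [sd0]
        have : sg σ u + gam0 G σ (rp σ u) + (sg σ v + gam0 G σ (rp σ v)) =
            (sg σ u + sg σ v) + (gam0 G σ (rp σ u) + gam0 G σ (rp σ v)) := by ring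
        rw [this, ← hij, zmod2_self_add, add_zero, ht1]
      rw [this, nsmul_eq_mul, mul_one, zmod2_natCast_odd hodd]
      decide
    · rw [none_val_even hodd]
      have htg : tg G σ (rp σ u) (rp σ v) = 0 := by
        simp only [tg]
        by_cases h : (E1 G σ).Nonempty
        · rw [dif_pos h]
          have hp := h.choose_spec
          simp only [E1, Finset.mem_filter, Finset.mem_product] at hp
          have hne12 : h.choose.1 ≠ h.choose.2 := fun hh => by
            have : vord h.choose.1 < vord h.choose.2 := hp.2.1; rw [hh] at this; omega
          rw [if_neg]
          rintro ⟨-, hor⟩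
          rcases hor with hh | hh
          · rw [← hij] at hh
            exact hne12 (by rw [← (Prod.ext_iff.1 hh).1, ← (Prod.ext_iff.1 hh).2])
          · rw [← hij] at hh
            exact hne12 (by rw [← (Prod.ext_iff.1 hh).1, ← (Prod.ext_iff.1 hh).2])
        · rw [dif_neg h]
      rw [htg, nsmul_eq_mul, mul_one, zmod2_natCast_even hodd]
      decide
  -- cross pair
  · set i := rp σ u with hidef
    set j := rp σ v with hjdef
    set t := sg σ u + sg σ v with htdef
    have hFpt : ∀ x ∈ RR σ,
        (if rp σ u ≠ x ∧ rp σ v ≠ x then (sd G σ u x + sd G σ v x) else 0)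
          = (t + gam G σ i x + gam G σ j x)
            + (if x = i then (t + gam G σ i i + gam G σ j i) else 0)
            + (if x = j then (t + gam G σ i j + gam G σ j j) else 0) := by
      intro x _
      by_cases hx1 : x = i
      · rw [if_neg (fun hh => hh.1 hx1.symm), if_pos hx1, if_neg (fun hh => hij (by rw [← hx1, hh]))]
        rw [hx1, add_zero]
        exact (zmod2_self_add _).symm
      · by_cases hx2 : x = j
        · rw [if_neg (fun hh => hh.2 hx2.symm), if_neg hx1, if_pos hx2, hx2, add_zero]
          exact (zmod2_self_add _).symm
        · rw [if_pos ⟨fun hh => hx1 hh.symm, fun hh => hx2 hh.symm⟩, if_neg hx1, if_neg hx2,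
            add_zero, add_zero]
          simp only [sd, ← hidef, ← hjdef]
          ring
    rw [Finset.sum_congr rfl hFpt]
    rw [Finset.sum_add_distrib, Finset.sum_add_distrib]
    rw [Finset.sum_ite_eq' (RR σ) i, Finset.sum_ite_eq' (RR σ) j, if_pos hiR, if_pos hjR]
    rw [gam_self, gam_self, add_zero, add_zero]
    have hsplit3 : (∑ x ∈ RR σ, (t + gam G σ i x + gam G σ j x))
        = (RR σ).card • t + (∑ x ∈ RR σ, gam G σ i x) + (∑ x ∈ RR σ, gam G σ j x) := by
      rw [Finset.sum_add_distrib, Finset.sum_add_distrib, Finset.sum_const]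
    rw [hsplit3, W_lemma hiR, W_lemma hjR]
    have hA1 : (if G.Adj u v then (1:ZMod 2) else 0) = A1 G i j := by
      simp only [A1]
      exact if_congr (adj_transfer hσne hinv htw hij) rfl rfl
    rw [hA1]
    by_cases hodd : Odd (RR σ).card
    · rw [none_val_odd hodd, if_pos hodd, if_pos hodd]
      have htg0 : tg G σ i j = 0 := by
        simp only [tg]
        by_cases h : (E1 G σ).Nonempty
        · rw [dif_pos h, if_neg (fun hh => hh.1.1 hodd)]
        · rw [dif_neg h]
      have hsd0 : sd0 G σ u + sd0 G σ v = t + f2 G σ i + f2 G σ j := by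
        simp only [sd0, gam0, if_pos hodd, ← hidef, ← hjdef, htdef]
        ring
      rw [nsmul_eq_mul, zmod2_natCast_odd hodd, one_mul]
      have hgam : gam G σ i j + gam G σ j i = A1 G i j + tg G σ i j := by
        have := gam_add (G := G) (σ := σ) hij
        simpa only [A2] using this
      linear_combination hsd0 + hgam + htg0 + 2 * zmod2_self_add t +
        zmod2_self_add (f2 G σ i) + zmod2_self_add (f2 G σ j)
    · rw [none_val_even hodd, if_neg hodd, if_neg hodd]
      rw [nsmul_eq_mul, zmod2_natCast_even hodd, zero_mul]
      have hgam : gam G σ i j + gam G σ j i = A1 G i j + tg G σ i j := by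
        have := gam_add (G := G) (σ := σ) hij
        simpa only [A2] using this
      linear_combination hgam + zmod2_self_add t + zmod2_self_add (tg G σ i j)

omit hσne hinv hadj htw in
theorem Bo_disjoint (o : Option {x // x ∈ RR σ}) :
    Disjoint (Bo G σ o).1 (Bo G σ o).2 := by
  rw [Finset.disjoint_left]
  intro a ha hb
  match o with
  | some r =>
    simp only [Bo, Finset.mem_filter] at ha hb
    have h0 := ha.2.2
    have h1 := hb.2.2
    rw [h0] at h1
    exact absurd h1 (by decide)
  | none =>
    by_cases hodd : Odd (RR σ).card
    · simp only [Bo, if_pos hodd, Finset.mem_filter] at ha hb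
      rw [ha.2] at hb
      exact absurd hb.2 (by decide)
    · simp only [Bo, if_neg hodd] at ha hb
      by_cases h : (E1 G σ).Nonempty
      · rw [dif_pos h] at ha hb
        by_cases ht : tact G σ
        · rw [if_pos ht] at ha hb
          simp only [Finset.mem_filter, Finset.mem_univ, true_and] at ha hb
          have hp := h.choose_spec
          simp only [E1, Finset.mem_filter, Finset.mem_product] at hp
          have : vord h.choose.1 < vord h.choose.2 := hp.2.1
          rw [ha] at hb
          rw [hb] at this
          omega
        · rw [if_neg ht] at ha
          exact absurd ha (Finset.notMem_empty a)
      · rw [dif_neg h] at ha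
        exact absurd ha (Finset.notMem_empty a)

theorem filter_card_equiv {α β : Type*} [Fintype α] [Fintype β] (e : α ≃ β) (p : β → Prop) :
    (Finset.univ.filter (fun a => p (e a))).card = (Finset.univ.filter p).card := by
  classical
  apply Finset.card_bij (fun a _ => e a)
  · intro a ha
    simp only [Finset.mem_filter, Finset.mem_univ, true_and] at ha ⊢
    exact ha
  · intro a _ b _ hab
    exact e.injective hab
  · intro b hb
    refine ⟨e.symm b, ?_, by simp⟩
    simp only [Finset.mem_filter, Finset.mem_univ, true_and] at hb ⊢
    simpa using hb

theorem odd_iff_cast (n : ℕ) : Odd n ↔ ((n : ZMod 2) = 1) := by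
  constructor
  · exact zmod2_natCast_odd
  · intro h
    by_contra hcon
    rw [zmod2_natCast_even hcon] at h
    exact absurd h (by decide)

include hσne hinv hadj htw in
theorem cover_exists :
    ∃ B : Fin ((RR σ).card + 1) → Finset V × Finset V, IsOddCover G B := by
  classical
  have hcard : Fintype.card (Option {x // x ∈ RR σ}) = (RR σ).card + 1 := by
    simp [Fintype.card_option]
  set e := Fintype.equivFinOfCardEq hcard with he
  refine ⟨fun t => Bo G σ (e.symm t), ?_, ?_⟩
  · intro i
    exact Bo_disjoint (o := e.symm i)
  · intro u v huv
    have hfe : (Finset.univ.filter (fun i : Fin ((RR σ).card + 1) =>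
        (u ∈ (Bo G σ (e.symm i)).1 ∧ v ∈ (Bo G σ (e.symm i)).2) ∨
        (u ∈ (Bo G σ (e.symm i)).2 ∧ v ∈ (Bo G σ (e.symm i)).1)))
        = (Finset.univ.filter (fun i : Fin ((RR σ).card + 1) => OppP u v (Bo G σ (e.symm i)))) := by
      ext i
      simp only [Finset.mem_filter, Finset.mem_univ, true_and, OppP]
      exact ((@Finset.mem_filter _ (fun a => OppP u v (Bo G σ (e.symm a)))
        (fun _ => Classical.propDecidable _) _ i).trans (by simp [OppP])).symm
    rw [hfe, filter_card_equiv e.symm (fun o => OppP u v (Bo G σ o)), odd_iff_cast]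
    have hcast : (((Finset.univ.filter (fun o => OppP u v (Bo G σ o))).card : ℕ) : ZMod 2)
        = ∑ o : Option {x // x ∈ RR σ}, (if OppP u v (Bo G σ o) then (1 : ZMod 2) else 0) := by
      rw [Finset.card_filter]
      push_cast
      rfl
    rw [hcast, Fintype.sum_option, key_sum hσne hinv hadj htw u v huv]
    by_cases h : G.Adj u v
    · rw [if_pos h]
      exact iff_of_true h rfl
    · rw [if_neg h]
      exact iff_of_false h (by decide)

end KeyHelpers
end OddCoverAux


theorem stmt17 {V : Type*} [Fintype V] (G : SimpleGraph V) (M : G.Subgraph)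
    (hM : M.IsPerfectMatching)
    (htwin : ∀ u w : V, M.Adj u w →
      G.neighborSet u ∪ {u} = G.neighborSet w ∪ {w}) :
    r2 G = Fintype.card V ∧ b2 G ≤ Fintype.card V / 2 + 1 := by
  classical
  obtain ⟨hm, hsp⟩ := hM
  set σ : V → V := fun v => (hm (hsp v)).choose with hσ
  have hMadj : ∀ v, M.Adj v (σ v) := fun v => ((hm (hsp v)).choose_spec).1
  have hadj : ∀ v, G.Adj v (σ v) := fun v => M.adj_sub (hMadj v)
  have hσne : ∀ v, σ v ≠ v := fun v => (hadj v).ne'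
  have hinv : ∀ v, σ (σ v) = v := by
    intro v
    exact (((hm (hsp (σ v))).choose_spec).2 v (hMadj v).symm).symm
  have htw : ∀ v z, z ≠ v → z ≠ σ v → (G.Adj v z ↔ G.Adj (σ v) z) := by
    intro v z hz1 hz2
    have h := htwin v (σ v) (hMadj v)
    have h2 := Set.ext_iff.mp h z
    simp only [Set.mem_union, SimpleGraph.mem_neighborSet, Set.mem_singleton_iff] at h2
    constructor
    · intro ha
      rcases h2.mp (Or.inl ha) with hb | hb
      · exact hb
      · exact absurd hb hz2
    · intro ha
      rcases h2.mpr (Or.inl ha) with hb | hb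
      · exact hb
      · exact absurd hb hz1
  constructor
  · exact OddCoverAux.rank_aux G σ hadj hinv htw
  · obtain ⟨B, hB⟩ := OddCoverAux.cover_exists hσne hinv hadj htw
    have hcard : Fintype.card V / 2 + 1 = (OddCoverAux.RR σ).card + 1 := by
      rw [OddCoverAux.card_eq hσne hinv]
      omega
    rw [hcard]
    exact Nat.sInf_le ⟨B, hB⟩
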